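/- arXiv:1912.11118 — 5 statements merged into one kernel-verified Lean document; each statement's English description precedes it below -/
import Mathlib

section
/- The ElGamal zero-test is correct: for any t, m : ZMod r, the ciphertext (R, C) = (g^t, g^m * U^t) satisfies C = R^u if and only if m = 0. -/
/-- Correctness of the ElGamal zero-test: the ciphertext
`(R, C) = (g ^ t, g ^ m * U ^ t)` satisfies `C = R ^ u` iff `m = 0`. -/
theorem elgamal_zero_test_correct {G : Type*} [CommGroup G] [Fintype G]
    (r : ℕ) (hr : r.Prime) (hcard : Fintype.card G = r) (g : G)
    (hgen : Function.Bijective fun t : ZMod r => g ^ t.val)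
    (u : ZMod r) (t m : ZMod r) :
    g ^ m.val * (g ^ u.val) ^ t.val = (g ^ t.val) ^ u.val ↔ m = 0 := by
  haveI : NeZero r := ⟨hr.ne_zero⟩
  haveI : Fact r.Prime := ⟨hr⟩
  have hordvd : orderOf g ∣ r := hcard ▸ orderOf_dvd_card
  have horder : orderOf g = r := by
    rcases (Nat.Prime.eq_one_or_self_of_dvd hr _ hordvd) with h1 | h
    · exfalso
      have hg1 : g = 1 := orderOf_eq_one_iff.mp h1
      have := hgen.injective (a₁ := 0) (a₂ := 1) (by simp [hg1])
      exact absurd this (by simp [Ne, (Fact.out : r.Prime).one_lt])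
    · exact h
  rw [← pow_mul, ← pow_mul, ← pow_add, pow_eq_pow_iff_modEq, horder]
  constructor
  · intro h
    have h0 : m.val ≡ 0 [MOD r] := by
      have := (Nat.ModEq.add_right_cancel' (u.val * t.val) ?_ : m.val ≡ 0 [MOD r])
      · exact this
      · simpa [Nat.mul_comm] using h
    have : r ∣ m.val := (Nat.modEq_zero_iff_dvd).mp h0
    have : m.val = 0 := Nat.eq_zero_of_dvd_of_lt this m.val_lt
    exact (ZMod.val_eq_zero m).mp this
  · intro h
    subst h
    simp [Nat.mul_comm, Nat.ModEq]
end

section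
/- A correctly formed homomorphic-addition output is uniformly distributed over the ciphertexts of the sum: if (R₁, C₁) ∈ C(m₁) and (R₂, C₂) ∈ C(m₂), and y is drawn from the uniform probability mass function on ZMod r, then the pushforward distribution of y under the map y ↦ (R₁ * R₂ * g^y, C₁ * C₂ * U^y) is the uniform probability mass function on the finite set C(m₁ + m₂). -/
lemma map_uniform_inj {α β : Type*} [Fintype α] [Nonempty α] [DecidableEq β]
    (f : α → β) (hf : Function.Injective f) :
    PMF.map f (PMF.uniformOfFintype α) =
      PMF.uniformOfFinset (Finset.univ.image f) (Finset.univ_nonempty.image f) := by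
  ext b
  rw [PMF.map_apply, PMF.uniformOfFinset_apply, tsum_fintype]
  by_cases hb : b ∈ Finset.univ.image f
  · obtain ⟨a, -, rfl⟩ := Finset.mem_image.mp hb
    rw [Finset.sum_eq_single a]
    · simp [hf.eq_iff, Finset.card_image_of_injective _ hf, Finset.card_univ]
    · intro a' _ ha'; rw [if_neg (fun h => ha' (hf h.symm))]
    · simp
  · rw [if_neg hb, Finset.sum_eq_zero]
    intro a _
    have : b ≠ f a := fun h => hb (h ▸ Finset.mem_image_of_mem f (Finset.mem_univ a))
    simp [this]

/-- A correctly formed homomorphic-addition output with a uniformly random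
re-randomizer `y` is uniformly distributed over the ciphertexts of the sum:
the pushforward of the uniform distribution on `ZMod r` under
`y ↦ (R₁ * R₂ * g ^ y, C₁ * C₂ * U ^ y)` is the uniform distribution on
`C(m₁ + m₂)`. -/
theorem elgamal_rerandomized_add_uniform {G : Type*} [CommGroup G] [Fintype G]
    [DecidableEq G] (r : ℕ) [Fact r.Prime] (hcard : Fintype.card G = r) (g : G)
    (hgen : Function.Bijective fun t : ZMod r => g ^ t.val)
    (u : ZMod r) (m₁ m₂ : ZMod r) (R₁ C₁ R₂ C₂ : G)
    (h₁ : ∃ t : ZMod r, R₁ = g ^ t.val ∧ C₁ = g ^ m₁.val * (g ^ u.val) ^ t.val)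
    (h₂ : ∃ t : ZMod r, R₂ = g ^ t.val ∧ C₂ = g ^ m₂.val * (g ^ u.val) ^ t.val) :
    PMF.map
        (fun y : ZMod r => (R₁ * R₂ * g ^ y.val, C₁ * C₂ * (g ^ u.val) ^ y.val))
        (PMF.uniformOfFintype (ZMod r)) =
      PMF.uniformOfFinset
        (Finset.univ.image fun t : ZMod r =>
          (g ^ t.val, g ^ (m₁ + m₂).val * (g ^ u.val) ^ t.val))
        (Finset.univ_nonempty.image _) := by
  have hrp : r.Prime := Fact.out
  have hr1 : 1 < r := hrp.one_lt
  haveI : NeZero r := ⟨hrp.ne_zero⟩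
  -- the order of g is r
  have hord : orderOf g = r := by
    have hdvd : orderOf g ∣ r := hcard ▸ orderOf_dvd_card
    rcases (hrp.eq_one_or_self_of_dvd _ hdvd) with h1 | h
    · exfalso
      have hg1 : g = 1 := orderOf_eq_one_iff.mp h1
      have : (0 : ZMod r) = 1 := hgen.1 (by simp [hg1])
      exact zero_ne_one this
    · exact h
  have key : ∀ a b : ZMod r, g ^ a.val * g ^ b.val = g ^ (a + b).val := by
    intro a b
    rw [← pow_add, ZMod.val_add]
    refine pow_eq_pow_iff_modEq.mpr ?_
    rw [hord]
    exact (Nat.mod_modEq _ r).symm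
  have key2 : ∀ a b : ZMod r, (g ^ a.val) ^ b.val = g ^ (a * b).val := by
    intro a b
    rw [← pow_mul, ZMod.val_mul]
    refine pow_eq_pow_iff_modEq.mpr ?_
    rw [hord]
    exact (Nat.mod_modEq _ r).symm
  have einj : Function.Injective (fun t : ZMod r => g ^ t.val) := hgen.injective
  obtain ⟨t₁, rfl, rfl⟩ := h₁
  obtain ⟨t₂, rfl, rfl⟩ := h₂
  -- rewrite the pushforward function
  have hfun : (fun y : ZMod r =>
        (g ^ t₁.val * g ^ t₂.val * g ^ y.val,
          g ^ m₁.val * (g ^ u.val) ^ t₁.val * (g ^ m₂.val * (g ^ u.val) ^ t₂.val) *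
            (g ^ u.val) ^ y.val)) =
      fun y : ZMod r =>
        (g ^ (t₁ + t₂ + y).val,
          g ^ (m₁ + m₂).val * (g ^ u.val) ^ (t₁ + t₂ + y).val) := by
    funext y
    refine Prod.ext ?_ ?_
    · simp only [key]
    · simp only [key2, key]
      exact congrArg (fun z : ZMod r => g ^ z.val) (by ring)
  rw [hfun]
  have hinj : Function.Injective (fun y : ZMod r =>
      (g ^ (t₁ + t₂ + y).val, g ^ (m₁ + m₂).val * (g ^ u.val) ^ (t₁ + t₂ + y).val)) := by
    intro a b h
    have := einj (congrArg Prod.fst h)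
    simpa using this
  rw [map_uniform_inj _ hinj]
  have hset : (Finset.univ.image fun y : ZMod r =>
        (g ^ (t₁ + t₂ + y).val, g ^ (m₁ + m₂).val * (g ^ u.val) ^ (t₁ + t₂ + y).val)) =
      Finset.univ.image fun t : ZMod r =>
        (g ^ t.val, g ^ (m₁ + m₂).val * (g ^ u.val) ^ t.val) := by
    have hσ : Function.Surjective (fun y : ZMod r => t₁ + t₂ + y) :=
      (Equiv.addLeft (t₁ + t₂)).surjective
    calc (Finset.univ.image fun y : ZMod r =>
            (g ^ (t₁ + t₂ + y).val, g ^ (m₁ + m₂).val * (g ^ u.val) ^ (t₁ + t₂ + y).val))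
        = (Finset.univ.image (fun y : ZMod r => t₁ + t₂ + y)).image
            (fun t : ZMod r => (g ^ t.val, g ^ (m₁ + m₂).val * (g ^ u.val) ^ t.val)) := by
          rw [Finset.image_image]; rfl
      _ = _ := by rw [Finset.image_univ_of_surjective hσ]
  congr 1
end

section
/- A blinded nonzero-plaintext ElGamal ciphertext reveals nothing beyond the zero-test: let t be drawn from the uniform probability mass function on ZMod r, and independently let m be drawn from the uniform probability mass function on the nonzero elements of ZMod r. Then the pair (g^t, g^m * U^t) is uniformly distributed over the set {(R, C) ∈ G × G : C ≠ R^u}, i.e. over the set of all ciphertexts whose plaintext is nonzero, a set of cardinality r * (r - 1). -/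
/-- A blinded nonzero-plaintext ElGamal ciphertext reveals nothing beyond the
zero-test: if `t` is uniform on `ZMod r` and, independently, `m` is uniform on
the nonzero elements of `ZMod r`, then `(g ^ t, g ^ m * U ^ t)` is uniformly
distributed over `{(R, C) : C ≠ R ^ u}`, a set of cardinality `r * (r - 1)`. -/
theorem elgamal_blinded_nonzero_uniform {G : Type*} [CommGroup G] [Fintype G]
    [DecidableEq G] (r : ℕ) [Fact r.Prime] (hcard : Fintype.card G = r) (g : G)
    (hgen : Function.Bijective fun t : ZMod r => g ^ t.val)
    (u : ZMod r) :
    (Finset.univ.filter fun p : G × G => p.2 ≠ p.1 ^ u.val).card = r * (r - 1) ∧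
      ∀ p : G × G,
        ((PMF.uniformOfFintype (ZMod r)).bind fun t : ZMod r =>
            PMF.map (fun m : ZMod r => (g ^ t.val, g ^ m.val * (g ^ u.val) ^ t.val))
              (PMF.uniformOfFinset ({(0 : ZMod r)}ᶜ : Finset (ZMod r)) ⟨1, by simp⟩)) p =
          if p.2 ≠ p.1 ^ u.val then 1 / ((r * (r - 1) : ℕ) : ENNReal) else 0 := by
  haveI : NeZero r := ⟨(Fact.out : r.Prime).ne_zero⟩
  have hr1 : 1 < r := (Fact.out : r.Prime).one_lt
  have e : ZMod r ≃ G := Equiv.ofBijective _ hgen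
  have hcardc : ({(0 : ZMod r)}ᶜ : Finset (ZMod r)).card = r - 1 := by
    rw [Finset.card_compl, Finset.card_singleton, ZMod.card]
  have hmul : r * (r - 1) = r * r - r := by
    cases r with
    | zero => rfl
    | succ n => simp [Nat.succ_sub_one, Nat.mul_succ, Nat.mul_comm]
  constructor
  · have hgraph : (Finset.univ.filter fun p : G × G => p.2 = p.1 ^ u.val)
        = Finset.univ.image (fun R : G => (R, R ^ u.val)) := by
      ext p
      simp only [Finset.mem_filter, Finset.mem_univ, true_and, Finset.mem_image]
      constructor
      · intro h; exact ⟨p.1, by rw [← h]⟩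
      · rintro ⟨R, rfl⟩; rfl
    have hinj : Function.Injective (fun R : G => (R, R ^ u.val)) := by
      intro a b h; exact congrArg Prod.fst h
    have hg2 : (Finset.univ.filter fun p : G × G => p.2 = p.1 ^ u.val).card = r := by
      rw [hgraph, Finset.card_image_of_injective _ hinj, Finset.card_univ, hcard]
    have htot := Finset.card_filter_add_card_filter_not
      (s := (Finset.univ : Finset (G × G))) (p := fun p : G × G => p.2 = p.1 ^ u.val)
    have hcard2 : (Finset.univ : Finset (G × G)).card = r * r := by
      simp [Finset.card_univ, hcard]
    have : (Finset.univ.filter fun p : G × G => ¬ p.2 = p.1 ^ u.val).card = r * r - r := by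
      omega
    rw [hmul]
    convert this using 2
  · intro p
    obtain ⟨R, C⟩ := p
    obtain ⟨t₀, hR⟩ := hgen.2 R
    simp only at hR
    have hpowc : (g ^ u.val) ^ t₀.val = R ^ u.val := by
      rw [← hR, ← pow_mul, ← pow_mul, mul_comm]
    have hu : ∀ m : ZMod r, (PMF.uniformOfFinset ({(0 : ZMod r)}ᶜ : Finset (ZMod r)) ⟨1, by simp⟩) m
        = if m ∈ ({(0 : ZMod r)}ᶜ : Finset (ZMod r)) then (({(0 : ZMod r)}ᶜ : Finset (ZMod r)).card : ENNReal)⁻¹ else 0 :=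
      fun m => by convert PMF.uniformOfFinset_apply (s := ({(0 : ZMod r)}ᶜ : Finset (ZMod r))) ⟨1, by simp⟩ m
    simp only [PMF.bind_apply, PMF.map_apply, PMF.uniformOfFintype_apply,
      hu, tsum_fintype, ZMod.card]
    rw [Finset.sum_eq_single t₀]
    · by_cases h : C = R ^ u.val
      · rw [if_neg (by simpa using h)]
        rw [Finset.sum_eq_zero, mul_zero]
        intro m _
        by_cases hpe : (R, C) = (g ^ t₀.val, g ^ m.val * (g ^ u.val) ^ t₀.val)
        · rw [if_pos hpe, if_neg]
          have h2 : C = g ^ m.val * (g ^ u.val) ^ t₀.val := congrArg Prod.snd hpe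
          rw [hpowc, h] at h2
          have h3 : g ^ m.val = 1 := right_eq_mul.mp h2
          have hm : m = 0 := hgen.1 (by simp only [ZMod.val_zero, pow_zero, h3])
          simp [hm]
        · rw [if_neg hpe]
      · rw [if_pos (by simpa using h)]
        obtain ⟨m₀, hm₀⟩ := hgen.2 (C * ((g ^ u.val) ^ t₀.val)⁻¹)
        simp only at hm₀
        have hCm : g ^ m₀.val * (g ^ u.val) ^ t₀.val = C := by
          rw [hm₀, inv_mul_cancel_right]
        have hm₀ne : m₀ ≠ 0 := by
          intro h0
          apply h
          rw [← hCm, h0, ZMod.val_zero, pow_zero, one_mul, hpowc]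
        rw [Finset.sum_eq_single m₀]
        · rw [if_pos (by rw [Prod.mk.injEq]; exact ⟨hR.symm, hCm.symm⟩),
            if_pos (by simpa using hm₀ne), hcardc]
          rw [Nat.cast_mul, one_div, ENNReal.mul_inv (Or.inl (Nat.cast_ne_zero.mpr (by omega))) (Or.inl (ENNReal.natCast_ne_top r))]
        · intro m _ hm
          rw [if_neg]
          intro hcontra
          have h2 : C = g ^ m.val * (g ^ u.val) ^ t₀.val := congrArg Prod.snd hcontra
          apply hm
          apply hgen.1
          show g ^ m.val = g ^ m₀.val
          rw [← mul_left_inj ((g ^ u.val) ^ t₀.val), hCm, ← h2]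
        · intro hmem; exact absurd (Finset.mem_univ m₀) hmem
    · intro t _ ht
      rw [Finset.sum_eq_zero, mul_zero]
      intro m _
      rw [if_neg]
      intro hcontra
      have h1 : R = g ^ t.val := congrArg Prod.fst hcontra
      refine ht (hgen.1 ?_)
      show g ^ t.val = g ^ t₀.val
      rw [hR]; exact h1.symm
    · intro hmem; exact absurd (Finset.mem_univ t₀) hmem
end

section
/- Plaintext-level correctness of the cuckoo-filter private membership test: (there exist i : Fin b and j : Fin 2 with R i j = 0) if and only if (there exists i : Fin b such that X i i₁ = f or X i i₂ = f). That is, the masked response contains a zero entry exactly when the fingerprint f appears in one of the two queried buckets of the cuckoo filter. -/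
/-- Plaintext-level correctness of the cuckoo-filter private membership test:
with `R = M ⊙ (X ⬝ Q - f • J)` (entrywise mask `M` with nonzero entries,
all-ones matrix `J`), some entry of `R` is zero iff the fingerprint `f`
appears in one of the two queried buckets of the cuckoo filter `X`. -/
theorem cuckoo_pmt_plaintext_correct (r : ℕ) (hr : r.Prime) (b β : ℕ)
    (hb : 0 < b) (hβ : 0 < β)
    (X : Matrix (Fin b) (Fin β) (ZMod r)) (f : ZMod r) (i₁ i₂ : Fin β)
    (Q : Matrix (Fin β) (Fin 2) (ZMod r))
    (hQ0 : ∀ i : Fin β, Q i 0 = if i = i₁ then 1 else 0)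
    (hQ1 : ∀ i : Fin β, Q i 1 = if i = i₂ then 1 else 0)
    (M : Matrix (Fin b) (Fin 2) (ZMod r)) (hM : ∀ i j, M i j ≠ 0)
    (R : Matrix (Fin b) (Fin 2) (ZMod r))
    (hR : R = M.hadamard (X * Q - f • (Matrix.of fun _ _ => (1 : ZMod r) : Matrix (Fin b) (Fin 2) (ZMod r)))) :
    (∃ i : Fin b, ∃ j : Fin 2, R i j = 0) ↔
      ∃ i : Fin b, X i i₁ = f ∨ X i i₂ = f := by
  haveI : Fact r.Prime := ⟨hr⟩
  have hXQ0 : ∀ i : Fin b, (X * Q) i 0 = X i i₁ := by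
    intro i
    simp only [Matrix.mul_apply, hQ0]
    simp
  have hXQ1 : ∀ i : Fin b, (X * Q) i 1 = X i i₂ := by
    intro i
    simp only [Matrix.mul_apply, hQ1]
    simp
  have hRij : ∀ i j, R i j = M i j * ((X * Q) i j - f) := by
    intro i j
    simp [hR, Matrix.hadamard, Matrix.sub_apply, Matrix.smul_apply]
  constructor
  · rintro ⟨i, j, hj⟩
    rw [hRij] at hj
    rcases mul_eq_zero.mp hj with h | h
    · exact absurd h (hM i j)
    · refine ⟨i, ?_⟩
      fin_cases j
      · left; rw [← hXQ0 i]; exact sub_eq_zero.mp h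
      · right; rw [← hXQ1 i]; exact sub_eq_zero.mp h
  · rintro ⟨i, h | h⟩
    · exact ⟨i, 0, by rw [hRij, hXQ0, h]; ring⟩
    · exact ⟨i, 1, by rw [hRij, hXQ1, h]; ring⟩
end

section
/- Lower bound on the expected number of queries to extract a uniformly random fingerprint: let S be a nonempty finite set of cardinality N, let F be drawn from the uniform probability mass function on S, and let A₁, A₂, … be a sequence of finite subsets of S, each of cardinality at most c ≥ 1, whose union is all of S. Define T to be the least index q ≥ 1 such that F ∈ A₁ ∪ ⋯ ∪ A_q. Then the expected value of T is at least N / (2c). -/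
set_option maxRecDepth 10000


/-- Lower bound on the expected number of queries to extract a uniformly
random fingerprint: if `F` is uniform on a nonempty finite set `S` of
cardinality `N`, the sets `A 1, A 2, …` are subsets of `S` of cardinality at
most `c ≥ 1` covering all of `S`, and `T x` is the least `q ≥ 1` such that
`x ∈ A 1 ∪ ⋯ ∪ A q`, then the expected value of `T` under the uniform
distribution, namely `(∑ x ∈ S, T x) / N`, is at least `N / (2 * c)`. -/
theorem extraction_expected_queries_lower_bound {α : Type*}
    (S : Finset α) (hS : S.Nonempty) (c : ℕ) (hc : 1 ≤ c)
    (A : ℕ → Finset α) (hA : ∀ q, A q ⊆ S) (hAc : ∀ q, (A q).card ≤ c)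
    (hcover : ∀ x ∈ S, ∃ q, 1 ≤ q ∧ x ∈ A q)
    (T : α → ℕ)
    (hT : ∀ x ∈ S,
      IsLeast {q : ℕ | 1 ≤ q ∧ ∃ i ∈ Finset.Icc 1 q, x ∈ A i} (T x)) :
    (S.card : ℝ) / (2 * c) ≤ (∑ x ∈ S, (T x : ℝ)) / S.card := by
  classical
  set N := S.card with hN
  have hN1 : 1 ≤ N := hS.card_pos
  set m := N / c + 1 with hm
  have hc0 : 0 < c := hc
  -- counting bound: at most k*c elements have T ≤ k
  have key : ∀ k : ℕ, (S.filter (fun x => T x ≤ k)).card ≤ k * c := by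
    intro k
    have hsub : S.filter (fun x => T x ≤ k) ⊆ (Finset.Icc 1 k).biUnion A := by
      intro x hx
      simp only [Finset.mem_filter] at hx
      obtain ⟨hxS, hxk⟩ := hx
      obtain ⟨⟨h1, i, hi, hxi⟩, _⟩ := hT x hxS
      simp only [Finset.mem_biUnion]
      exact ⟨i, Finset.Icc_subset_Icc_right hxk hi, hxi⟩
    calc (S.filter (fun x => T x ≤ k)).card
        ≤ ((Finset.Icc 1 k).biUnion A).card := Finset.card_le_card hsub
      _ ≤ ∑ i ∈ Finset.Icc 1 k, (A i).card := Finset.card_biUnion_le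
      _ ≤ ∑ i ∈ Finset.Icc 1 k, c := Finset.sum_le_sum fun i _ => hAc i
      _ = k * c := by simp [Nat.card_Icc, mul_comm]
  -- tail-sum bound
  have step2 : ∑ k ∈ Finset.range m, (S.filter (fun x => k < T x)).card
      ≤ ∑ x ∈ S, T x := by
    have hx : ∀ x ∈ S, ((Finset.range m).filter (fun k => k < T x)).card ≤ T x := by
      intro x _
      calc ((Finset.range m).filter (fun k => k < T x)).card
          ≤ (Finset.range (T x)).card := by
            apply Finset.card_le_card
            intro k hk
            simp only [Finset.mem_filter, Finset.mem_range] at *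
            exact hk.2
        _ = T x := Finset.card_range _
    calc ∑ k ∈ Finset.range m, (S.filter (fun x => k < T x)).card
        = ∑ k ∈ Finset.range m, ∑ x ∈ S, if k < T x then 1 else 0 :=
          Finset.sum_congr rfl fun k _ => Finset.card_filter _ _
      _ = ∑ x ∈ S, ∑ k ∈ Finset.range m, if k < T x then 1 else 0 := Finset.sum_comm
      _ = ∑ x ∈ S, ((Finset.range m).filter (fun k => k < T x)).card :=
          Finset.sum_congr rfl fun x _ => (Finset.card_filter _ _).symm
      _ ≤ ∑ x ∈ S, T x := Finset.sum_le_sum hx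
  -- real-valued lower bound on each tail count
  have tail : ∀ k : ℕ, (N : ℝ) - k * c ≤ ((S.filter (fun x => k < T x)).card : ℝ) := by
    intro k
    have hsplit : (S.filter (fun x => k < T x)).card
        + (S.filter (fun x => ¬ k < T x)).card = N := by
      exact Finset.card_filter_add_card_filter_not _
    have hle : (S.filter (fun x => ¬ k < T x)).card ≤ k * c := by
      have : (S.filter (fun x => ¬ k < T x)) = S.filter (fun x => T x ≤ k) := by
        apply Finset.filter_congr
        intro x _
        simp [not_lt]
      rw [this]; exact key k
    have := hsplit
    push_cast [← hsplit]
    have : ((S.filter (fun x => ¬ k < T x)).card : ℝ) ≤ k * c := by exact_mod_cast hle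
    linarith
  -- summed real lower bound
  have hsum : (m : ℝ) * N - c * (∑ k ∈ Finset.range m, (k : ℝ)) ≤ ∑ x ∈ S, (T x : ℝ) := by
    have h1 : ∑ k ∈ Finset.range m, ((N : ℝ) - k * c)
        ≤ ∑ k ∈ Finset.range m, ((S.filter (fun x => k < T x)).card : ℝ) :=
      Finset.sum_le_sum fun k _ => tail k
    have h2 : (∑ k ∈ Finset.range m, ((S.filter (fun x => k < T x)).card : ℝ))
        ≤ ∑ x ∈ S, (T x : ℝ) := by
      exact_mod_cast step2
    have h3 : ∑ k ∈ Finset.range m, ((N : ℝ) - k * c)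
        = (m : ℝ) * N - c * (∑ k ∈ Finset.range m, (k : ℝ)) := by
      rw [Finset.sum_sub_distrib]
      simp [Finset.mul_sum, mul_comm]
    linarith [h3 ▸ h1]
  -- Gauss sum
  have hm1 : 1 ≤ m := Nat.le_add_left 1 _
  have hG : (∑ k ∈ Finset.range m, (k : ℝ)) * 2 = (m : ℝ) * ((m : ℝ) - 1) := by
    have h : ((∑ k ∈ Finset.range m, k) * 2 : ℕ) = (m * (m - 1) : ℕ) :=
      Finset.sum_range_id_mul_two m
    have h2 := congrArg (Nat.cast (R := ℝ)) h
    rw [Nat.cast_mul, Nat.cast_mul, Nat.cast_sub hm1, Nat.cast_sum] at h2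
    simpa using h2
  -- bounds on m*c
  have hmc1 : (N : ℝ) ≤ (m : ℝ) * c := by
    have : N < m * c := by
      rw [hm]
      exact (Nat.div_lt_iff_lt_mul hc0).mp (Nat.lt_succ_self _)
    exact_mod_cast this.le
  have hmc2 : (m : ℝ) * c ≤ (N : ℝ) + c := by
    have : m * c ≤ N + c := by
      rw [hm, add_mul, one_mul]
      exact Nat.add_le_add_right (Nat.div_mul_le_self N c) c
    exact_mod_cast this
  -- finish
  have hNpos : (0 : ℝ) < N := by exact_mod_cast hN1
  have hcpos : (0 : ℝ) < c := by exact_mod_cast hc0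
  rw [div_le_div_iff₀ (by positivity) hNpos]
  set G : ℝ := ∑ k ∈ Finset.range m, (k : ℝ) with hGdef
  have hmR : (1 : ℝ) ≤ (m : ℝ) := by exact_mod_cast hm1
  have hsq : ((m : ℝ) * c - N) ^ 2 ≤ (c : ℝ) ^ 2 := by nlinarith [hmc1, hmc2]
  have hcm : (c : ℝ) ^ 2 ≤ (c : ℝ) ^ 2 * m := by nlinarith [sq_nonneg (c : ℝ)]
  have hmul : 2 * (c : ℝ) * ((m : ℝ) * N - c * G) ≤ 2 * c * (∑ x ∈ S, (T x : ℝ)) :=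
    mul_le_mul_of_nonneg_left hsum (by positivity)
  have hG2 : (c : ℝ) * (G * 2) = c * ((m : ℝ) * ((m : ℝ) - 1)) := by rw [hG]
  nlinarith [hmul, hG2, hsq, hcm, hmc1, hmc2, hcpos, hNpos]
end
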